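/- If f : ℝ² → ℂ is a polyanalytic function of order n+1 (i.e., ∂_{z̄}^{n+1} f = 0), then there exist unique holomorphic functions f_0, …, f_n on ℂ such that f(z) = Σ_{k=0}^{n} z̄^k f_k(z) for all z ∈ ℂ. -/

import Mathlib

open Complex Finset

/-- Anti-Wirtinger derivative `∂_z̄ = (1/2)(∂_x + i∂_y)`, as an operator on
functions `ℂ → ℂ` (using the real Fréchet derivative). -/
noncomputable def wirtingerZBar : (ℂ → ℂ) → (ℂ → ℂ) := fun f z =>
  (1 / 2 : ℂ) * (fderiv ℝ f z 1 + Complex.I * fderiv ℝ f z Complex.I)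

namespace PolyAux

lemma wz_of_holo {f : ℂ → ℂ} {z : ℂ} (hf : DifferentiableAt ℂ f z) :
    wirtingerZBar f z = 0 := by
  have h := hf.fderiv_restrictScalars ℝ
  have hlin : fderiv ℂ f z Complex.I = Complex.I * fderiv ℂ f z 1 := by
    have := (fderiv ℂ f z).map_smul Complex.I (1 : ℂ)
    simpa [smul_eq_mul] using this
  simp only [wirtingerZBar, h, ContinuousLinearMap.coe_restrictScalars']
  rw [hlin]
  have : Complex.I * (Complex.I * fderiv ℂ f z 1) = -fderiv ℂ f z 1 := by
    rw [← mul_assoc, Complex.I_mul_I]; ring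
  rw [this]; ring

lemma holo_of_wz {f : ℂ → ℂ} {z : ℂ} (hd : DifferentiableAt ℝ f z)
    (hz : wirtingerZBar f z = 0) : DifferentiableAt ℂ f z := by
  have hsum : fderiv ℝ f z 1 + Complex.I * fderiv ℝ f z Complex.I = 0 := by
    have := hz
    simp only [wirtingerZBar] at this
    field_simp at this
    simpa using this
  have hI : fderiv ℝ f z Complex.I = Complex.I * fderiv ℝ f z 1 := by
    linear_combination (-Complex.I) * hsum + (fderiv ℝ f z Complex.I) * Complex.I_mul_I
  set L : ℂ →L[ℂ] ℂ := (fderiv ℝ f z 1) • ContinuousLinearMap.id ℂ ℂ with hL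
  have hres : L.restrictScalars ℝ = fderiv ℝ f z := by
    ext w
    have hw : w = (w.re : ℝ) • (1 : ℂ) + (w.im : ℝ) • Complex.I := by
      rw [Complex.real_smul, Complex.real_smul, mul_one]
      exact (Complex.re_add_im w).symm
    calc (L.restrictScalars ℝ) w = fderiv ℝ f z 1 * w := by
          simp [hL, smul_eq_mul]
      _ = fderiv ℝ f z w := by
          conv_rhs => rw [hw]
          rw [map_add, map_smul, map_smul, hI]
          simp only [Complex.real_smul, smul_eq_mul]
          conv_lhs => rw [← Complex.re_add_im w]
          ring
  exact (hasFDerivAt_of_restrictScalars ℝ hd.hasFDerivAt hres).differentiableAt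

lemma wz_sub {f g : ℂ → ℂ} {z : ℂ} (hf : DifferentiableAt ℝ f z)
    (hg : DifferentiableAt ℝ g z) :
    wirtingerZBar (fun w => f w - g w) z = wirtingerZBar f z - wirtingerZBar g z := by
  simp only [wirtingerZBar, fderiv_fun_sub hf hg, ContinuousLinearMap.sub_apply]
  ring

lemma wz_sum {ι : Type*} (s : Finset ι) (F : ι → ℂ → ℂ) {z : ℂ}
    (h : ∀ i ∈ s, DifferentiableAt ℝ (F i) z) :
    wirtingerZBar (fun w => ∑ i ∈ s, F i w) z = ∑ i ∈ s, wirtingerZBar (F i) z := by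
  simp only [wirtingerZBar, fderiv_fun_sum h, ContinuousLinearMap.sum_apply, Finset.mul_sum,
    mul_add, Finset.sum_add_distrib]

lemma wz_mul {f g : ℂ → ℂ} {z : ℂ} (hf : DifferentiableAt ℝ f z)
    (hg : DifferentiableAt ℝ g z) :
    wirtingerZBar (fun w => f w * g w) z =
      wirtingerZBar f z * g z + f z * wirtingerZBar g z := by
  simp only [wirtingerZBar, fderiv_fun_mul hf hg, ContinuousLinearMap.add_apply,
    ContinuousLinearMap.smul_apply, smul_eq_mul]
  ring

lemma conj_hasFDerivAt (z : ℂ) :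
    HasFDerivAt (starRingEnd ℂ) (Complex.conjCLE : ℂ →L[ℝ] ℂ) z := by
  have h := Complex.conjCLE.hasFDerivAt (x := z)
  have : ⇑Complex.conjCLE = ⇑(starRingEnd ℂ) := funext Complex.conjCLE_apply
  rwa [this] at h

lemma conj_differentiableAt (z : ℂ) : DifferentiableAt ℝ (starRingEnd ℂ) z :=
  (conj_hasFDerivAt z).differentiableAt

lemma wz_conj (z : ℂ) : wirtingerZBar (starRingEnd ℂ) z = 1 := by
  have h := (conj_hasFDerivAt z).fderiv
  simp only [wirtingerZBar, h]
  have h1 : (Complex.conjCLE : ℂ →L[ℝ] ℂ) 1 = 1 := by simp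
  have hI : (Complex.conjCLE : ℂ →L[ℝ] ℂ) Complex.I = -Complex.I := by simp
  rw [h1, hI]
  have : Complex.I * -Complex.I = 1 := by
    rw [mul_neg, Complex.I_mul_I]; ring
  rw [this]; ring

lemma conjpow_differentiableAt (k : ℕ) (z : ℂ) :
    DifferentiableAt ℝ (fun w => (starRingEnd ℂ w) ^ k) z :=
  (conj_differentiableAt z).pow k

lemma wz_conjpow (k : ℕ) (z : ℂ) :
    wirtingerZBar (fun w => (starRingEnd ℂ w) ^ (k + 1)) z =
      (k + 1 : ℂ) * (starRingEnd ℂ z) ^ k := by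
  induction k with
  | zero =>
    have : (fun w => (starRingEnd ℂ w) ^ 1) = ⇑(starRingEnd ℂ) := by
      funext w; simp
    rw [this, wz_conj]; simp
  | succ k ih =>
    have heq : (fun w => (starRingEnd ℂ w) ^ (k + 2)) =
        fun w => (starRingEnd ℂ w) ^ (k + 1) * (starRingEnd ℂ w) := by
      funext w; ring
    rw [heq, wz_mul (conjpow_differentiableAt (k + 1) z) (conj_differentiableAt z),
      ih, wz_conj]
    push_cast
    ring

/-- `∂z̄ (z̄^k h) = k z̄^(k-1) h` for holomorphic `h` (with natural subtraction). -/
lemma wz_conjpow_mul {h : ℂ → ℂ} (hh : Differentiable ℂ h) (k : ℕ) (z : ℂ) :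
    wirtingerZBar (fun w => (starRingEnd ℂ w) ^ k * h w) z =
      (k : ℂ) * (starRingEnd ℂ z) ^ (k - 1) * h z := by
  have hhr : DifferentiableAt ℝ h z := (hh z).restrictScalars ℝ
  cases k with
  | zero =>
    simp only [pow_zero, one_mul, Nat.cast_zero, zero_mul]
    exact wz_of_holo (hh z)
  | succ k =>
    rw [wz_mul (conjpow_differentiableAt (k + 1) z) hhr, wz_conjpow, wz_of_holo (hh z)]
    simp only [Nat.add_sub_cancel]
    push_cast
    ring

lemma wz_const (c : ℂ) (z : ℂ) : wirtingerZBar (fun _ => c) z = 0 := by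
  simp [wirtingerZBar, fderiv_const]

lemma contDiff_wz {m : ℕ} {f : ℂ → ℂ} (hf : ContDiff ℝ (m + 1 : ℕ) f) :
    ContDiff ℝ (m : ℕ) (wirtingerZBar f) := by
  have h1 : ContDiff ℝ (m : ℕ) (fderiv ℝ f) := hf.fderiv_right (by norm_cast)
  have hA : ContDiff ℝ (m : ℕ) (fun z => fderiv ℝ f z 1) :=
    (ContinuousLinearMap.apply ℝ ℂ (1 : ℂ)).contDiff.comp h1
  have hB : ContDiff ℝ (m : ℕ) (fun z => fderiv ℝ f z Complex.I) :=
    (ContinuousLinearMap.apply ℝ ℂ Complex.I).contDiff.comp h1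
  exact contDiff_const.mul (hA.add (contDiff_const.mul hB))

/-- Uniqueness: a vanishing polyanalytic combination has all coefficients zero. -/
lemma coeffs_zero : ∀ (m : ℕ) (h : Fin m → ℂ → ℂ),
    (∀ k, Differentiable ℂ (h k)) →
    (∀ z, ∑ k : Fin m, (starRingEnd ℂ z) ^ (k : ℕ) * h k z = 0) →
    ∀ k z, h k z = 0 := by
  intro m
  induction m with
  | zero => exact fun h _ _ k => k.elim0
  | succ m ih =>
    intro h hholo hsum
    have hterm : ∀ (k : Fin (m + 1)) (z : ℂ),
        DifferentiableAt ℝ (fun w => (starRingEnd ℂ w) ^ (k : ℕ) * h k w) z :=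
      fun k z => (conjpow_differentiableAt _ z).mul ((hholo k z).restrictScalars ℝ)
    have hwz : ∀ z : ℂ, ∑ k : Fin (m + 1),
        ((k : ℕ) : ℂ) * (starRingEnd ℂ z) ^ ((k : ℕ) - 1) * h k z = 0 := by
      intro z
      have h0 : wirtingerZBar (fun w => ∑ k : Fin (m + 1),
          (starRingEnd ℂ w) ^ (k : ℕ) * h k w) z = 0 := by
        have : (fun w => ∑ k : Fin (m + 1), (starRingEnd ℂ w) ^ (k : ℕ) * h k w) =
            fun _ => (0 : ℂ) := funext hsum
        rw [this]; exact wz_const 0 z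
      rw [wz_sum _ _ (fun k _ => hterm k z)] at h0
      calc ∑ k : Fin (m + 1), ((k : ℕ) : ℂ) * (starRingEnd ℂ z) ^ ((k : ℕ) - 1) * h k z
          = ∑ k : Fin (m + 1),
            wirtingerZBar (fun w => (starRingEnd ℂ w) ^ (k : ℕ) * h k w) z := by
            exact Finset.sum_congr rfl fun k _ => (wz_conjpow_mul (hholo k) _ z).symm
        _ = 0 := h0
    -- tail coefficients vanish
    have htail : ∀ (j : Fin m) (z : ℂ), h j.succ z = 0 := by
      have := ih (fun j => fun z => (((j : ℕ) : ℂ) + 1) * h j.succ z)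
        (fun j => (differentiable_const _).mul (hholo j.succ))
        (by
          intro z
          have := hwz z
          rw [Fin.sum_univ_succ] at this
          simpa [mul_assoc, mul_comm, mul_left_comm] using this)
      intro j z
      have hj := this j z
      have hne : (((j : ℕ) : ℂ) + 1) ≠ 0 := Nat.cast_add_one_ne_zero (j : ℕ)
      exact (mul_eq_zero.mp hj).resolve_left hne
    intro k z
    refine Fin.cases ?_ (fun j => htail j z) k
    have := hsum z
    rw [Fin.sum_univ_succ] at this
    simpa [htail] using this

/-- Existence of the decomposition. -/
lemma exists_decomp : ∀ (n : ℕ) (f : ℂ → ℂ), ContDiff ℝ (n + 1 : ℕ) f →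
    wirtingerZBar^[n + 1] f = (fun _ => 0) →
    ∃ fs : Fin (n + 1) → ℂ → ℂ, (∀ k, Differentiable ℂ (fs k)) ∧
      ∀ z : ℂ, f z = ∑ k : Fin (n + 1), (starRingEnd ℂ z) ^ (k : ℕ) * fs k z := by
  intro n
  induction n with
  | zero =>
    intro f hf hp
    have hdf : Differentiable ℝ f := hf.differentiable (by norm_cast)
    have hholo : Differentiable ℂ f := by
      intro z
      refine holo_of_wz (hdf z) ?_
      have := congrFun hp z
      simpa using this
    exact ⟨fun _ => f, fun _ => hholo, fun z => by simp⟩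
  | succ n ih =>
    intro f hf hp
    have hfC : ContDiff ℝ ((n + 1) + 1 : ℕ) f := by exact_mod_cast hf
    set g := wirtingerZBar f with hg
    have hgC : ContDiff ℝ (n + 1 : ℕ) g := contDiff_wz hfC
    have hgp : wirtingerZBar^[n + 1] g = fun _ => 0 := by
      rw [hg, ← Function.iterate_succ_apply]
      exact hp
    obtain ⟨gs, hgs_holo, hgs_eq⟩ := ih g hgC hgp
    set G : Fin (n + 1) → ℂ → ℂ :=
      fun k => fun w => (1 / ((k : ℕ) + 1) : ℂ) * gs k w with hG
    have hG_holo : ∀ k, Differentiable ℂ (G k) :=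
      fun k => (differentiable_const _).mul (hgs_holo k)
    set F : ℂ → ℂ := fun w => ∑ k : Fin (n + 1),
      (starRingEnd ℂ w) ^ ((k : ℕ) + 1) * G k w with hF
    have hFd : ∀ z, DifferentiableAt ℝ F z := by
      intro z
      exact DifferentiableAt.fun_sum fun k _ =>
        (conjpow_differentiableAt _ z).fun_mul ((hG_holo k z).restrictScalars ℝ)
    have hwzF : ∀ z, wirtingerZBar F z = g z := by
      intro z
      rw [hF]
      rw [wz_sum _ _ (fun k _ => (conjpow_differentiableAt _ z).fun_mul
        ((hG_holo k z).restrictScalars ℝ))]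
      have : ∀ k : Fin (n + 1),
          wirtingerZBar (fun w => (starRingEnd ℂ w) ^ ((k : ℕ) + 1) * G k w) z =
            (starRingEnd ℂ z) ^ (k : ℕ) * gs k z := by
        intro k
        rw [wz_conjpow_mul (hG_holo k) ((k : ℕ) + 1) z]
        simp only [Nat.add_sub_cancel, hG]
        push_cast
        have hne : (((k : ℕ) : ℂ) + 1) ≠ 0 := Nat.cast_add_one_ne_zero (k : ℕ)
        field_simp
      rw [Finset.sum_congr rfl fun k _ => this k]
      exact (hgs_eq z).symm
    set φ : ℂ → ℂ := fun w => f w - F w with hφ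
    have hfd : Differentiable ℝ f := hfC.differentiable (by norm_cast)
    have hφ_holo : Differentiable ℂ φ := by
      intro z
      refine holo_of_wz ((hfd z).sub (hFd z)) ?_
      rw [hφ, wz_sub (hfd z) (hFd z), hwzF z]
      simp [hg]
    set fs : Fin (n + 2) → ℂ → ℂ := Fin.cases φ G with hfs
    refine ⟨fs, ?_, ?_⟩
    · intro k
      refine Fin.cases ?_ ?_ k
      · simpa [hfs] using hφ_holo
      · intro j; simpa [hfs] using hG_holo j
    · intro z
      rw [Fin.sum_univ_succ]
      have h0 : fs 0 = φ := by simp [hfs]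
      have hsucc : ∀ j : Fin (n + 1), fs j.succ = G j := by
        intro j; simp [hfs]
      rw [h0]
      have : ∑ j : Fin (n + 1), (starRingEnd ℂ z) ^ ((j.succ : ℕ)) * fs j.succ z
          = F z := by
        rw [hF]
        refine Finset.sum_congr rfl fun j _ => ?_
        rw [hsucc j]
        congr 1
      rw [this]
      simp [hφ]

end PolyAux

theorem polyanalytic_decomposition (n : ℕ) (f : ℂ → ℂ)
    (hf : ContDiff ℝ (n + 1) f)
    (hpoly : wirtingerZBar^[n + 1] f = fun _ => 0) :
    ∃! fs : Fin (n + 1) → ℂ → ℂ,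
      (∀ k, Differentiable ℂ (fs k)) ∧
        ∀ z : ℂ, f z = ∑ k : Fin (n + 1), ((starRingEnd ℂ) z) ^ (k : ℕ) * fs k z := by
  obtain ⟨fs, hfs_holo, hfs_eq⟩ := PolyAux.exists_decomp n f (by exact_mod_cast hf) hpoly
  refine ⟨fs, ⟨hfs_holo, hfs_eq⟩, ?_⟩
  rintro gs ⟨hgs_holo, hgs_eq⟩
  have key : ∀ (k : Fin (n + 1)) (z : ℂ), gs k z - fs k z = 0 := by
    refine PolyAux.coeffs_zero (n + 1) (fun k z => gs k z - fs k z)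
      (fun k => (hgs_holo k).sub (hfs_holo k)) ?_
    intro z
    have := (hfs_eq z).symm.trans (hgs_eq z)
    simp only [mul_sub, Finset.sum_sub_distrib]
    rw [← hgs_eq z, ← hfs_eq z]
    ring
  funext k z
  exact sub_eq_zero.mp (key k z)
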